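/- Let n, m be natural numbers, let a, b', b'', c ∈ ℤⁿ be column vectors, set b = b' + b'', and let P be an n × m integer matrix. Let A = (a | b | c | P) be the n × (m+3) integer matrix with columns a, b, c followed by the columns of P. Let A' be the (n+2) × (m+5) integer matrix whose first n rows form the block (a | b' | c | P | b'' | 0), whose (n+1)-st row is (1, 1, 1, 0, …, 0, 0, 1) (entries 1 under columns a, b', c, zeros under P and b'', entry 1 in the last column), and whose (n+2)-nd row is (1, 0, 1, 0, …, 0, 1, 1) (entry 1 under a, 0 under b', 1 under c, zeros under P, entry 1 under b'', entry 1 in the last column). Then A' is ℤ-equivalent to the block-diagonal matrix A ⊕ (1) ⊕ (1), i.e., the (n+2) × (m+5) matrix whose first n rows are (a | b | c | P | 0 | 0) and whose last two rows are (0,…,0,1,0) and (0,…,0,0,1). -/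

import Mathlib

theorem reidemeister_II_matrix (n m : ℕ) (a b' b'' c : Fin n → ℤ)
    (b : Fin n → ℤ) (hb : b = b' + b'')
    (P : Matrix (Fin n) (Fin m) ℤ) :
    -- `A = (a | b | c | P)`
    ∀ A : Matrix (Fin n) (Fin 3 ⊕ Fin m) ℤ,
      A = Matrix.fromCols (Matrix.of fun i => ![a i, b i, c i]) P →
    -- `A'` : first `n` rows are `(a | b' | c | P | b'' | 0)`, the next row is
    -- `(1,1,1,0,…,0,0,1)` and the last row is `(1,0,1,0,…,0,1,1)`
    ∀ A' : Matrix (Fin n ⊕ Fin 2) ((Fin 3 ⊕ Fin m) ⊕ Fin 2) ℤ,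
      A' = Matrix.fromBlocks
        (Matrix.fromCols (Matrix.of fun i => ![a i, b' i, c i]) P)
        (Matrix.of fun i => ![b'' i, 0])
        (Matrix.fromCols (!![1,1,1;1,0,1] : Matrix (Fin 2) (Fin 3) ℤ) 0)
        (!![0,1;1,1] : Matrix (Fin 2) (Fin 2) ℤ) →
    -- `A'` is ℤ-equivalent to `A ⊕ (1) ⊕ (1)`
    ∃ (P' : Matrix (Fin n ⊕ Fin 2) (Fin n ⊕ Fin 2) ℤ)
      (Q' : Matrix ((Fin 3 ⊕ Fin m) ⊕ Fin 2) ((Fin 3 ⊕ Fin m) ⊕ Fin 2) ℤ),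
      IsUnit P'.det ∧ IsUnit Q'.det ∧ P' * A' * Q' = Matrix.fromBlocks A 0 0 1 := by
  intro A hA A' hA'
  set M : Matrix (Fin n) (Fin 3 ⊕ Fin m) ℤ :=
    Matrix.fromCols (Matrix.of fun i => ![a i, b' i, c i]) P with hM
  set X : Matrix (Fin n) (Fin 2) ℤ := Matrix.of fun i => ![b'' i, 0] with hX
  set R : Matrix (Fin 2) (Fin 3 ⊕ Fin m) ℤ :=
    Matrix.fromCols (!![1,1,1;1,0,1] : Matrix (Fin 2) (Fin 3) ℤ) 0 with hR
  set S : Matrix (Fin 2) (Fin 2) ℤ := !![0,1;1,1] with hS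
  set Sinv : Matrix (Fin 2) (Fin 2) ℤ := !![-1,1;1,0] with hSinv
  have hone : (1 : Matrix (Fin 2) (Fin 2) ℤ) = !![1,0;0,1] := Matrix.one_fin_two
  have hSS : Sinv * S = 1 := by
    rw [hS, hSinv, hone]
    norm_num [Matrix.mul_fin_two]
  have hSS' : S * Sinv = 1 := by
    rw [hS, hSinv, hone]
    norm_num [Matrix.mul_fin_two]
  have h1 : X * Sinv * S = X := by rw [Matrix.mul_assoc, hSS, Matrix.mul_one]
  have h2 : S * (Sinv * R) = R := by rw [← Matrix.mul_assoc, hSS', Matrix.one_mul]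
  have hM2 : M + -(X * Sinv * R) = A := by
    rw [hA]
    ext i j
    cases j with
    | inl k =>
      fin_cases k <;>
        simp [hM, hX, hR, hSinv, hb, Matrix.mul_apply, Fin.sum_univ_two,
          Matrix.fromCols]
    | inr k =>
      simp [hM, hX, hR, hSinv, Matrix.mul_apply, Fin.sum_univ_two,
        Matrix.fromCols]
  refine ⟨Matrix.fromBlocks 1 (-(X * Sinv)) 0 1,
    Matrix.fromBlocks 1 0 (-(Sinv * R)) Sinv, ?_, ?_, ?_⟩
  · rw [Matrix.det_fromBlocks_zero₂₁]
    simp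
  · rw [Matrix.det_fromBlocks_zero₁₂]
    simp [hSinv, Matrix.det_fin_two_of]
  · rw [hA', Matrix.fromBlocks_multiply, Matrix.fromBlocks_multiply]
    simp only [Matrix.one_mul, Matrix.mul_one, Matrix.zero_mul, Matrix.mul_zero,
      zero_add, add_zero, Matrix.neg_mul, h1, h2, hSS', add_neg_cancel,
      Matrix.mul_neg, neg_neg]
    rw [hM2]
    simp
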